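/- arXiv:1912.10665 — 2 statements merged into one kernel-verified Lean document; each statement's English description precedes it below -/
import Mathlib

section
/- Let Γ ⊂ (0,∞) be a uniformly discrete set with Σ_{γ∈Γ} 1/√γ < ∞, and define for t ≤ 0: φ₊(t) = (−t² / (1 + i√|t|)⁸) · Π_{γ∈Γ} (1 − i√(|t|/γ)) (1 + i√(|t|/γ))^{−1}. Then the function t ↦ φ₊(t)·𝟙_{(−∞,0]}(t) on ℝ is continuously differentiable and its derivative belongs to L²(ℝ). -/
open MeasureTheory

noncomputable section

/-- A set `S ⊆ ℝ` is uniformly discrete. -/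
def UniformlyDiscrete (S : Set ℝ) : Prop :=
  ∃ δ > (0:ℝ), ∀ x ∈ S, ∀ y ∈ S, x ≠ y → δ ≤ |x - y|

/-- The boundary value `φ₊(t)`, `t ≤ 0`, of the function `φ` from the paper:
`φ₊(t) = (-t²/(1+i√|t|)⁸) ∏_{γ∈Γ} (1-i√(|t|/γ))(1+i√(|t|/γ))⁻¹`. -/
def phiPlus (Γ : Set ℝ) (t : ℝ) : ℂ :=
  (-(t : ℂ) ^ 2 / (1 + Complex.I * (Real.sqrt |t| : ℝ)) ^ 8) *
    ∏' γ : Γ, ((1 - Complex.I * (Real.sqrt (|t| / (γ : ℝ)) : ℝ)) /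
      (1 + Complex.I * (Real.sqrt (|t| / (γ : ℝ)) : ℝ)))

open Complex

set_option linter.unusedSectionVars false
set_option linter.unusedVariables false


lemma abs_arctan_le (x : ℝ) : |Real.arctan x| ≤ |x| := by
  have key : ∀ y : ℝ, 0 ≤ y → Real.arctan y ≤ y := by
    intro y hy
    have hmono : Monotone (fun z : ℝ => z - Real.arctan z) := by
      apply monotone_of_deriv_nonneg
      · exact differentiable_id.sub Real.differentiable_arctan
      · intro z
        rw [deriv_fun_sub differentiableAt_fun_id (Real.differentiable_arctan z), deriv_id'',
          Real.deriv_arctan]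
        have h1 : (0:ℝ) < 1 + z ^ 2 := by positivity
        have : 1 / (1 + z ^ 2) ≤ 1 := by
          rw [div_le_one h1]; nlinarith [sq_nonneg z]
        linarith
    have := hmono hy
    simpa [Real.arctan_zero] using this
  rcases le_or_gt 0 x with hx | hx
  · have h0 : (0:ℝ) ≤ Real.arctan x := by
      simpa using Real.arctan_strictMono.monotone hx
    rw [_root_.abs_of_nonneg hx, _root_.abs_of_nonneg h0]
    exact key x hx
  · have h2 := key (-x) (by linarith)
    have h3 : 0 ≤ Real.arctan (-x) := by
      simpa using Real.arctan_strictMono.monotone (by linarith : (0:ℝ) ≤ -x)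
    rw [Real.arctan_neg] at h2 h3
    rw [_root_.abs_of_nonpos (by linarith), _root_.abs_of_neg hx]
    linarith

lemma factor_eq (x : ℝ) : (1 - I * (x:ℂ)) / (1 + I * (x:ℂ))
    = Complex.exp (-2 * I * (Real.arctan x : ℝ)) := by
  have hden : (1:ℂ) + I * x ≠ 0 := by
    intro h
    have := congrArg Complex.re h
    simp at this
  have h1 : (0:ℝ) < 1 + x ^ 2 := by positivity
  have hss : Real.sqrt (1 + x ^ 2) ^ 2 = 1 + x ^ 2 := Real.sq_sqrt h1.le
  have hne : Real.sqrt (1 + x ^ 2) ≠ 0 := by positivity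
  have hs : Real.sin (2 * Real.arctan x) = 2 * x / (1 + x ^ 2) := by
    rw [Real.sin_two_mul, Real.sin_arctan, Real.cos_arctan]
    field_simp
    rw [hss]
  have hc : Real.cos (2 * Real.arctan x) = (1 - x ^ 2) / (1 + x ^ 2) := by
    rw [Real.cos_two_mul', Real.sin_arctan, Real.cos_arctan]
    field_simp
    rw [hss]
  have harg : (-2 : ℂ) * I * (Real.arctan x : ℝ) = (↑(-(2 * Real.arctan x)) : ℝ) * I := by
    push_cast; ring
  rw [harg, Complex.exp_mul_I]
  rw [div_eq_iff hden]
  rw [show Complex.cos (↑(-(2 * Real.arctan x)) : ℂ) = ↑(Real.cos (-(2 * Real.arctan x))) from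
    (Complex.ofReal_cos _).symm]
  rw [show Complex.sin (↑(-(2 * Real.arctan x)) : ℂ) = ↑(Real.sin (-(2 * Real.arctan x))) from
    (Complex.ofReal_sin _).symm]
  rw [Real.cos_neg, Real.sin_neg, hs, hc]
  have h1c : ((1:ℂ) + (x:ℂ) ^ 2) ≠ 0 := by
    intro h
    rw [show ((1:ℂ) + (x:ℂ) ^ 2) = ((1 + x ^ 2 : ℝ) : ℂ) by push_cast; ring] at h
    exact h1.ne' (by exact_mod_cast h)
  push_cast
  field_simp
  ring_nf
  simp [Complex.I_sq]
  ring_nf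

noncomputable def Afun (Γ : Set ℝ) (u : ℝ) : ℝ := ∑' γ : Γ, Real.arctan (u / Real.sqrt (γ:ℝ))

noncomputable def Sfun (Γ : Set ℝ) (u : ℝ) : ℝ :=
  ∑' γ : Γ, 1 / (1 + (u / Real.sqrt (γ:ℝ)) ^ 2) * (1 / Real.sqrt (γ:ℝ))


noncomputable def Efun (Γ : Set ℝ) (u : ℝ) : ℂ := Complex.exp (-2 * I * (Afun Γ u : ℝ))
noncomputable def hfun (Γ : Set ℝ) (u : ℝ) : ℂ := Efun Γ u / (1 + I * u) ^ 8
noncomputable def hder (Γ : Set ℝ) (u : ℝ) : ℂ :=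
  (Efun Γ u * (-2 * I * (Sfun Γ u : ℝ)) * (1 + I * u) ^ 8
    - Efun Γ u * (8 * (1 + I * u) ^ 7 * I)) / ((1 + I * u) ^ 8) ^ 2
noncomputable def Dfun (Γ : Set ℝ) (t : ℝ) : ℂ :=
  2 * (Real.sqrt (-t) : ℂ) ^ 2 * hfun Γ (Real.sqrt (-t))
    + ((Real.sqrt (-t) : ℂ) ^ 3 / 2) * hder Γ (Real.sqrt (-t))


section Aux

variable {Γ : Set ℝ} (hsum : Summable fun γ : Γ => 1 / Real.sqrt (γ:ℝ))

lemma sqrt_pos' (hΓ : Γ ⊆ Set.Ioi 0) (γ : Γ) : 0 < Real.sqrt (γ:ℝ) :=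
  Real.sqrt_pos.2 (hΓ γ.2)

include hsum

lemma term_bound (γ : Γ) (u : ℝ) :
    ‖1 / (1 + (u / Real.sqrt (γ:ℝ)) ^ 2) * (1 / Real.sqrt (γ:ℝ))‖ ≤ 1 / Real.sqrt (γ:ℝ) := by
  have h1 : (0:ℝ) < 1 + (u / Real.sqrt (γ:ℝ)) ^ 2 := by positivity
  rw [Real.norm_eq_abs, abs_mul]
  have h2 : |1 / (1 + (u / Real.sqrt (γ:ℝ)) ^ 2)| ≤ 1 := by
    rw [_root_.abs_of_nonneg (by positivity), div_le_one h1]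
    nlinarith [sq_nonneg (u / Real.sqrt (γ:ℝ))]
  have h3 : |1 / Real.sqrt (γ:ℝ)| = 1 / Real.sqrt (γ:ℝ) := abs_of_nonneg (by positivity)
  calc |1 / (1 + (u / Real.sqrt (γ:ℝ)) ^ 2)| * |1 / Real.sqrt (γ:ℝ)|
      ≤ 1 * |1 / Real.sqrt (γ:ℝ)| := by
        apply mul_le_mul_of_nonneg_right h2 (abs_nonneg _)
    _ = 1 / Real.sqrt (γ:ℝ) := by rw [one_mul, h3]

lemma hasDerivAt_A (u : ℝ) : HasDerivAt (Afun Γ) (Sfun Γ u) u := by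
  have h0 : Summable fun γ : Γ => Real.arctan ((0:ℝ) / Real.sqrt (γ:ℝ)) := by
    have he : (fun γ : Γ => Real.arctan ((0:ℝ) / Real.sqrt (γ:ℝ))) = fun _ => (0:ℝ) := by
      funext γ; simp
    rw [he]; exact summable_zero
  exact hasDerivAt_tsum (g := fun (γ : Γ) (y : ℝ) => Real.arctan (y / Real.sqrt (γ:ℝ)))
    (g' := fun (γ : Γ) (y : ℝ) => 1 / (1 + (y / Real.sqrt (γ:ℝ)) ^ 2) * (1 / Real.sqrt (γ:ℝ)))
    hsum
    (fun γ y => (Real.hasDerivAt_arctan (y / Real.sqrt (γ:ℝ))).comp (h₂ := Real.arctan) y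
      ((hasDerivAt_id y).div_const _))
    (fun γ y => term_bound hsum γ y) h0 u

lemma continuous_A : Continuous (Afun Γ) :=
  continuous_iff_continuousAt.2 fun u => (hasDerivAt_A hsum u).continuousAt

lemma continuous_S : Continuous (Sfun Γ) := by
  apply continuous_tsum _ hsum (fun γ u => term_bound hsum γ u)
  intro γ
  have h1 : Continuous fun u : ℝ => 1 + (u / Real.sqrt (γ:ℝ)) ^ 2 := by fun_prop
  exact (continuous_const.div h1 (fun u => by positivity)).mul continuous_const

lemma S_bound (u : ℝ) : ‖Sfun Γ u‖ ≤ ∑' γ : Γ, 1 / Real.sqrt (γ:ℝ) :=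
  tsum_of_norm_bounded hsum.hasSum (fun γ => term_bound hsum γ u)

lemma summable_arctan (u : ℝ) : Summable fun γ : Γ => Real.arctan (u / Real.sqrt (γ:ℝ)) := by
  apply Summable.of_norm
  apply Summable.of_nonneg_of_le (fun γ => norm_nonneg _)
    (fun γ => ?_) (hsum.mul_left |u|)
  rw [Real.norm_eq_abs]
  calc |Real.arctan (u / Real.sqrt (γ:ℝ))| ≤ |u / Real.sqrt (γ:ℝ)| := abs_arctan_le _
    _ ≤ |u| * (1 / Real.sqrt (γ:ℝ)) := by
        rw [abs_div, _root_.abs_of_nonneg (Real.sqrt_nonneg _)]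
        rw [div_eq_mul_one_div]

lemma tprod_eq (t : ℝ) :
    (∏' γ : Γ, ((1 - Complex.I * (Real.sqrt (|t| / (γ : ℝ)) : ℝ)) /
      (1 + Complex.I * (Real.sqrt (|t| / (γ : ℝ)) : ℝ))))
      = Complex.exp (-2 * I * (Afun Γ (Real.sqrt |t|) : ℝ)) := by
  have h1 : HasSum (fun γ : Γ => ((Real.arctan (Real.sqrt |t| / Real.sqrt (γ:ℝ)) : ℝ) : ℂ))
      ((Afun Γ (Real.sqrt |t|) : ℝ) : ℂ) :=
    Complex.hasSum_ofReal.2 (summable_arctan hsum (Real.sqrt |t|)).hasSum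
  have h2 := (h1.mul_left (-2 * I)).cexp
  have h3 : (fun γ : Γ => ((1 - Complex.I * (Real.sqrt (|t| / (γ : ℝ)) : ℝ)) /
      (1 + Complex.I * (Real.sqrt (|t| / (γ : ℝ)) : ℝ))))
      = cexp ∘ (fun γ : Γ => -2 * I * (Real.arctan (Real.sqrt |t| / Real.sqrt (γ:ℝ)) : ℝ)) := by
    funext γ
    rw [Real.sqrt_div (abs_nonneg t), Function.comp_apply, ← factor_eq]
  rw [h3, h2.tprod_eq]

end Aux

lemma hden_ne (u : ℝ) : ((1:ℂ) + I * u) ≠ 0 := by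
  intro h
  have := congrArg Complex.re h
  simp at this

lemma hden_pow_ne (u : ℝ) : ((1:ℂ) + I * u) ^ 8 ≠ 0 := pow_ne_zero _ (hden_ne u)

lemma abs_Efun (Γ : Set ℝ) (u : ℝ) : ‖Efun Γ u‖ = 1 := by
  rw [Efun, Complex.norm_exp,
    show (-2 * I * ((Afun Γ u : ℝ) : ℂ)).re = 0 by simp, Real.exp_zero]

lemma hasDerivAt_coe (u : ℝ) : HasDerivAt (fun y : ℝ => (y:ℂ)) 1 u :=
  HasDerivAt.ofReal_comp (hasDerivAt_id u)

lemma hasDerivAt_E {Γ : Set ℝ} (hsum : Summable fun γ : Γ => 1 / Real.sqrt (γ:ℝ)) (u : ℝ) :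
    HasDerivAt (Efun Γ) (Efun Γ u * (-2 * I * (Sfun Γ u : ℝ))) u := by
  have h1 : HasDerivAt (fun u : ℝ => ((Afun Γ u : ℝ) : ℂ)) ((Sfun Γ u : ℝ) : ℂ) u :=
    (hasDerivAt_A hsum u).ofReal_comp
  exact (h1.const_mul (-2 * I)).cexp

lemma hasDerivAt_den (u : ℝ) :
    HasDerivAt (fun u : ℝ => ((1:ℂ) + I * u) ^ 8) (8 * ((1:ℂ) + I * u) ^ 7 * I) u := by
  have h1 : HasDerivAt (fun u : ℝ => (1:ℂ) + I * u) (I * 1) u :=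
    ((hasDerivAt_coe u).const_mul I).const_add 1
  have hpow : HasDerivAt (fun z : ℂ => z ^ 8) (8 * ((1:ℂ) + I * u) ^ 7) ((1:ℂ) + I * u) := by
    simpa using hasDerivAt_pow 8 ((1:ℂ) + I * u)
  have h2 := HasDerivAt.comp u hpow h1
  convert h2 using 1
  · rfl
  · rfl
  push_cast
  ring

lemma hasDerivAt_h {Γ : Set ℝ} (hsum : Summable fun γ : Γ => 1 / Real.sqrt (γ:ℝ)) (u : ℝ) :
    HasDerivAt (hfun Γ) (hder Γ u) u :=
  (hasDerivAt_E hsum u).div (hasDerivAt_den u) (hden_pow_ne u)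

lemma continuous_E {Γ : Set ℝ} (hsum : Summable fun γ : Γ => 1 / Real.sqrt (γ:ℝ)) :
    Continuous (Efun Γ) :=
  Complex.continuous_exp.comp
    (continuous_const.mul (Complex.continuous_ofReal.comp (continuous_A hsum)))

lemma continuous_h {Γ : Set ℝ} (hsum : Summable fun γ : Γ => 1 / Real.sqrt (γ:ℝ)) :
    Continuous (hfun Γ) :=
  (continuous_E hsum).div (by fun_prop) hden_pow_ne

lemma continuous_hder {Γ : Set ℝ} (hsum : Summable fun γ : Γ => 1 / Real.sqrt (γ:ℝ)) :
    Continuous (hder Γ) := by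
  apply Continuous.div
  · apply Continuous.sub
    · exact ((continuous_E hsum).mul (continuous_const.mul
        (Complex.continuous_ofReal.comp (continuous_S hsum)))).mul (by fun_prop)
    · exact (continuous_E hsum).mul (by fun_prop)
  · fun_prop
  · exact fun u => pow_ne_zero _ (hden_pow_ne u)

lemma continuous_sqrtneg : Continuous (fun t : ℝ => Real.sqrt (-t)) :=
  Real.continuous_sqrt.comp continuous_neg

lemma continuous_D {Γ : Set ℝ} (hsum : Summable fun γ : Γ => 1 / Real.sqrt (γ:ℝ)) :
    Continuous (Dfun Γ) := by
  apply Continuous.add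
  · exact (continuous_const.mul ((Complex.continuous_ofReal.comp continuous_sqrtneg).pow 2)).mul
      ((continuous_h hsum).comp continuous_sqrtneg)
  · exact (((Complex.continuous_ofReal.comp continuous_sqrtneg).pow 3).div_const 2).mul
      ((continuous_hder hsum).comp continuous_sqrtneg)

lemma Dfun_eq_zero {Γ : Set ℝ} {t : ℝ} (ht : 0 ≤ t) : Dfun Γ t = 0 := by
  have h : Real.sqrt (-t) = 0 := Real.sqrt_eq_zero'.2 (by linarith)
  rw [Dfun, h]
  norm_num

lemma hasDerivAt_W {Γ : Set ℝ} (hs : Summable fun γ : Γ => 1 / Real.sqrt (γ:ℝ)) {t : ℝ}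
    (ht : t < 0) :
    HasDerivAt (fun t : ℝ => -(t:ℂ)^2 * hfun Γ (Real.sqrt (-t))) (Dfun Γ t) t := by
  set u := Real.sqrt (-t) with hu
  have hupos : 0 < u := Real.sqrt_pos.2 (by linarith)
  have hu2 : u ^ 2 = -t := Real.sq_sqrt (by linarith)
  have hsq : HasDerivAt (fun t : ℝ => Real.sqrt (-t)) (1 / (2 * u) * (-1)) t := by
    have h1 : HasDerivAt (fun x : ℝ => Real.sqrt x) (1 / (2 * u)) (-t) := by
      simpa using Real.hasDerivAt_sqrt (show (-t) ≠ 0 by linarith)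
    exact h1.comp t (hasDerivAt_neg t)
  have hcomp : HasDerivAt (fun t : ℝ => hfun Γ (Real.sqrt (-t)))
      ((1 / (2 * u) * (-1)) • hder Γ u) t :=
    HasDerivAt.scomp (g₁ := hfun Γ) t (hasDerivAt_h hs u) hsq
  have hpoly : HasDerivAt (fun t : ℝ => -(t:ℂ)^2) (-(2 * (t:ℂ))) t := by
    have hpow : HasDerivAt (fun z : ℂ => z ^ 2) (2 * (t:ℂ)) (t:ℂ) := by
      simpa using hasDerivAt_pow 2 ((t:ℂ))
    have h1 := HasDerivAt.comp t hpow (hasDerivAt_coe t)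
    have h3 := h1.neg
    simp at h3
    exact h3
  have hmul := hpoly.mul hcomp
  convert hmul using 1
  · rfl
  · rfl
  have huC : ((u:ℂ))^2 = -(t:ℂ) := by
    rw [show ((u:ℂ))^2 = ((u^2 : ℝ) : ℂ) by push_cast; ring, hu2]; push_cast; ring
  have huCne : (u:ℂ) ≠ 0 := by exact_mod_cast hupos.ne'
  rw [Dfun, ← hu]
  rw [Complex.real_smul]
  have htC : (t:ℂ) = -((u:ℂ))^2 := by rw [huC]; ring
  rw [htC]
  push_cast
  field_simp

lemma abs_den_sq (u : ℝ) : ‖(1:ℂ) + I * u‖ ^ 2 = 1 + u ^ 2 := by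
  rw [Complex.sq_norm, Complex.normSq_apply]
  simp
  ring

lemma one_le_abs_den (u : ℝ) : 1 ≤ ‖(1:ℂ) + I * u‖ := by
  have h := Complex.abs_re_le_norm ((1:ℂ) + I * u)
  simp at h
  calc (1:ℝ) = |(1:ℝ)| := by norm_num
  _ ≤ _ := by simpa using h

lemma abs_den_pow (u : ℝ) : ‖((1:ℂ) + I * u) ^ 8‖ = (1 + u ^ 2) ^ 4 := by
  rw [norm_pow, show (8:ℕ) = 2 * 4 by norm_num, pow_mul, abs_den_sq]

lemma hfun_norm (Γ : Set ℝ) (u : ℝ) : ‖hfun Γ u‖ = 1 / (1 + u ^ 2) ^ 4 := by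
  rw [hfun, norm_div, abs_Efun, abs_den_pow]

lemma hfun_norm_le_one (Γ : Set ℝ) (u : ℝ) : ‖hfun Γ u‖ ≤ 1 := by
  rw [hfun_norm]
  have h1 : (0:ℝ) < (1 + u ^ 2) ^ 4 := by positivity
  rw [div_le_one h1]
  nlinarith [sq_nonneg u, sq_nonneg (u^2), sq_nonneg (u^2+2), pow_pos (show (0:ℝ) < 1 + u^2 by positivity) 2]


/-- **Lemma 2.** The function `φ₊(t)·𝟙_{(-∞,0]}(t)` is continuously differentiable on `ℝ`
and its derivative belongs to `L²(ℝ)`. -/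
theorem phiPlus_indicator_contDiff (Γ : Set ℝ) (hΓ : Γ ⊆ Set.Ioi 0)
    (hud : UniformlyDiscrete Γ)
    (hsum : Summable fun γ : Γ => 1 / Real.sqrt (γ : ℝ)) :
    ContDiff ℝ 1 (Set.indicator (Set.Iic (0:ℝ)) (phiPlus Γ)) ∧
    MemLp (deriv (Set.indicator (Set.Iic (0:ℝ)) (phiPlus Γ))) 2 volume := by

  set F := Set.indicator (Set.Iic (0:ℝ)) (phiPlus Γ) with hF
  -- identity on Iic 0
  have phi_eq : ∀ t : ℝ, t ≤ 0 → phiPlus Γ t = -(t:ℂ)^2 * hfun Γ (Real.sqrt (-t)) := by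
    intro t ht
    rw [phiPlus, tprod_eq hsum t, abs_of_nonpos ht, hfun, Efun]
    rw [div_mul_eq_mul_div, mul_div_assoc]
  have hF_neg : ∀ t : ℝ, t ≤ 0 → F t = -(t:ℂ)^2 * hfun Γ (Real.sqrt (-t)) := by
    intro t ht
    rw [hF, Set.indicator_of_mem (Set.mem_Iic.2 ht), phi_eq t ht]
  have hF_pos : ∀ t : ℝ, 0 < t → F t = 0 := by
    intro t ht
    exact Set.indicator_of_notMem (by simpa using ht.not_ge) _
  have hF0 : F 0 = 0 := by
    rw [hF_neg 0 le_rfl]; norm_num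
  -- derivative everywhere
  have hderivF : ∀ t : ℝ, HasDerivAt F (Dfun Γ t) t := by
    intro t
    rcases lt_trichotomy t 0 with ht | ht | ht
    · have hev : F =ᶠ[nhds t] (fun t : ℝ => -(t:ℂ)^2 * hfun Γ (Real.sqrt (-t))) := by
        filter_upwards [Iio_mem_nhds ht] with s hs
        exact hF_neg s (le_of_lt hs)
      exact (hasDerivAt_W hsum ht).congr_of_eventuallyEq hev
    · subst ht
      rw [Dfun_eq_zero le_rfl]
      rw [hasDerivAt_iff_isLittleO]
      rw [Asymptotics.isLittleO_iff]
      intro c hc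
      have hball : ∀ᶠ s in nhds (0:ℝ), |s| < c := by
        have := Metric.ball_mem_nhds (0:ℝ) hc
        filter_upwards [this] with s hs
        simpa [Real.dist_eq] using hs
      filter_upwards [hball] with s hs
      rw [hF0]
      simp only [sub_zero, smul_zero, sub_zero]
      rcases le_or_gt s 0 with hs0 | hs0
      · rw [hF_neg s hs0]
        have h1 : ‖-(s:ℂ)^2 * hfun Γ (Real.sqrt (-s))‖ ≤ s ^ 2 := by
          rw [norm_mul]
          calc ‖-(s:ℂ)^2‖ * ‖hfun Γ (Real.sqrt (-s))‖ ≤ ‖-(s:ℂ)^2‖ * 1 :=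
            mul_le_mul_of_nonneg_left (hfun_norm_le_one _ _) (norm_nonneg _)
          _ = s ^ 2 := by
            rw [mul_one, norm_neg, norm_pow]
            simp [Complex.norm_real]
        calc ‖-(s:ℂ)^2 * hfun Γ (Real.sqrt (-s))‖ ≤ s^2 := h1
        _ = |s| * |s| := by rw [← _root_.sq_abs s, pow_two]
        _ ≤ c * |s| := mul_le_mul_of_nonneg_right hs.le (abs_nonneg s)
        _ = c * ‖s‖ := by rw [Real.norm_eq_abs]
      · rw [hF_pos s hs0]
        simp
        positivity
    · have hev : F =ᶠ[nhds t] (fun _ : ℝ => (0:ℂ)) := by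
        filter_upwards [Ioi_mem_nhds ht] with s hs
        exact hF_pos s hs
      rw [Dfun_eq_zero ht.le]
      exact (hasDerivAt_const t (0:ℂ)).congr_of_eventuallyEq hev
  have hderiv_eq : deriv F = Dfun Γ := funext fun t => (hderivF t).deriv
  constructor
  · rw [contDiff_one_iff_deriv]
    exact ⟨fun t => (hderivF t).differentiableAt, by rw [hderiv_eq]; exact continuous_D hsum⟩
  · rw [hderiv_eq]
    -- the L² bound
    set CC := ∑' γ : Γ, 1 / Real.sqrt (γ:ℝ) with hCC
    have hCC0 : 0 ≤ CC := tsum_nonneg fun γ => by positivity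
    set K := CC + 6 with hK
    have hbound : ∀ t : ℝ, ‖Dfun Γ t‖ ≤ K / (1 + t ^ 2) := by
      intro t
      rcases le_or_gt 0 t with ht | ht
      · rw [Dfun_eq_zero ht]
        simp only [norm_zero]
        positivity
      · set u := Real.sqrt (-t) with hu
        have hu0 : 0 ≤ u := Real.sqrt_nonneg _
        have hu2 : u ^ 2 = -t := Real.sq_sqrt (by linarith)
        have ht2 : t ^ 2 = u ^ 4 := by nlinarith
        have hpos : (0:ℝ) < (1 + u ^ 2) ^ 4 := by positivity
        have hden_norm : ‖((1:ℂ) + I * u) ^ 8‖ = (1 + u^2)^4 := abs_den_pow u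
        have hder_bound : ‖hder Γ u‖ ≤ (2 * CC + 8) / (1 + u ^ 2) ^ 4 := by
          rw [hder, norm_div]
          have hnum : ‖Efun Γ u * (-2 * I * (Sfun Γ u : ℝ)) * (1 + I * u) ^ 8
              - Efun Γ u * (8 * (1 + I * u) ^ 7 * I)‖ ≤ (2 * CC + 8) * (1 + u^2)^4 := by
            calc ‖Efun Γ u * (-2 * I * (Sfun Γ u : ℝ)) * (1 + I * u) ^ 8
                - Efun Γ u * (8 * (1 + I * u) ^ 7 * I)‖
                ≤ ‖Efun Γ u * (-2 * I * (Sfun Γ u : ℝ)) * (1 + I * u) ^ 8‖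
                  + ‖Efun Γ u * (8 * (1 + I * u) ^ 7 * I)‖ := norm_sub_le _ _
              _ ≤ 2 * CC * (1 + u^2)^4 + 8 * (1 + u^2)^4 := by
                  apply add_le_add
                  · rw [norm_mul, norm_mul, abs_Efun, one_mul, norm_mul, norm_mul]
                    simp only [norm_neg, Complex.norm_ofNat, Complex.norm_I, mul_one,
                      Complex.norm_real]
                    rw [hden_norm]
                    nlinarith [S_bound hsum u, norm_nonneg (Sfun Γ u), hpos.le, hpos]
                  · rw [norm_mul, abs_Efun, one_mul, norm_mul, norm_mul, norm_pow]
                    simp only [Complex.norm_ofNat, Complex.norm_I, mul_one]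
                    have h7 : ‖(1:ℂ) + I * u‖ ^ 7 ≤ ‖(1:ℂ) + I * u‖ ^ 8 :=
                      pow_le_pow_right₀ (one_le_abs_den u) (by norm_num)
                    calc 8 * ‖(1:ℂ) + I * u‖ ^ 7 ≤ 8 * ‖(1:ℂ) + I * u‖ ^ 8 := by linarith
                    _ = 8 * (1 + u^2)^4 := by rw [← norm_pow, hden_norm]
              _ = (2 * CC + 8) * (1 + u^2)^4 := by ring
          rw [norm_pow, hden_norm]
          rw [div_le_div_iff₀ (by positivity) hpos]
          calc ‖_‖ * (1+u^2)^4 ≤ ((2*CC+8) * (1+u^2)^4) * (1+u^2)^4 := by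
                apply mul_le_mul_of_nonneg_right hnum hpos.le
          _ = (2*CC+8) * ((1+u^2)^4)^2 := by ring
        have hD_le : ‖Dfun Γ t‖ ≤ (2 * u^2 + (CC + 4) * u^3) / (1 + u^2)^4 := by
          rw [Dfun, ← hu]
          calc ‖2 * (u:ℂ)^2 * hfun Γ u + ((u:ℂ)^3/2) * hder Γ u‖
              ≤ ‖2 * (u:ℂ)^2 * hfun Γ u‖ + ‖((u:ℂ)^3/2) * hder Γ u‖ := norm_add_le _ _
            _ ≤ 2 * u^2 * (1/(1+u^2)^4) + (u^3/2) * ((2*CC+8)/(1+u^2)^4) := by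
                apply add_le_add
                · rw [norm_mul, norm_mul, hfun_norm]
                  simp [Complex.norm_real, Complex.norm_ofNat, norm_pow, _root_.abs_of_nonneg hu0]
                · rw [norm_mul, norm_div]
                  simp only [norm_pow, Complex.norm_real, Complex.norm_ofNat,
                    Real.norm_eq_abs, _root_.abs_of_nonneg hu0]
                  apply mul_le_mul_of_nonneg_left hder_bound (by positivity)
            _ = (2 * u^2 + (CC + 4) * u^3) / (1 + u^2)^4 := by ring
        calc ‖Dfun Γ t‖ ≤ (2 * u^2 + (CC + 4) * u^3) / (1 + u^2)^4 := hD_le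
          _ ≤ K / (1 + u^4) := by
              rw [div_le_div_iff₀ hpos (by positivity), hK]
              have m1 : u^2 * (1 + u^4) ≤ (1 + u^2)^4 := by nlinarith [sq_nonneg u, sq_nonneg (u^2), sq_nonneg (u*(1-u)), sq_nonneg (u^3*(1-u)), sq_nonneg (1-u^2)]
              have m2 : u^3 * (1 + u^4) ≤ (1 + u^2)^4 := by nlinarith [sq_nonneg u, sq_nonneg (u^2), sq_nonneg (u*(1-u)), sq_nonneg (u^3*(1-u)), sq_nonneg (1-u^2), pow_nonneg hu0 3, pow_nonneg hu0 7]
              nlinarith [hCC0, pow_pos (show (0:ℝ) < 1+u^2 by positivity) 4]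
          _ = K / (1 + t^2) := by rw [ht2]
    have hmeas := (continuous_D hsum).aestronglyMeasurable (μ := volume)
    rw [memLp_two_iff_integrable_sq_norm hmeas]
    have hg : Integrable (fun t : ℝ => K^2 * (1 + t^2)⁻¹) volume :=
      integrable_inv_one_add_sq.const_mul _
    apply hg.mono
    · exact ((continuous_D hsum).norm.pow 2).aestronglyMeasurable
    · filter_upwards with t
      have h1 : ‖Dfun Γ t‖ ≤ K / (1 + t^2) := hbound t
      have h2 : (0:ℝ) < 1 + t^2 := by positivity
      have h3 : (0:ℝ) ≤ K := by positivity
      rw [Real.norm_eq_abs, Real.norm_eq_abs, _root_.abs_of_nonneg (by positivity),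
        _root_.abs_of_nonneg (by positivity)]
      have h4 : ‖Dfun Γ t‖^2 ≤ (K / (1+t^2))^2 := by
        apply pow_le_pow_left₀ (norm_nonneg _) h1
      calc ‖Dfun Γ t‖^2 ≤ (K / (1+t^2))^2 := h4
        _ = K^2 / (1+t^2)^2 := by rw [div_pow]
        _ ≤ K^2 / (1+t^2) := div_le_div_of_nonneg_left (by positivity) h2 (by nlinarith)
        _ = K^2 * (1+t^2)⁻¹ := by rw [div_eq_mul_inv]
end
end

section
/- Let w be a weight that is positive and increasing on (0,1) (so 1/w is decreasing on (0,1)). Let F and Φ be locally square-integrable functions on ℝ which vanish on (−∞,0), with Φ ∈ L²(0,1). If ∫₀¹ |F(s)|²/w(s) ds < ∞, then the convolution (F∗Φ)(t) = ∫₀ᵗ Φ(t−s)F(s) ds satisfies ∫₀¹ |(F∗Φ)(t)|²/w(t) dt < ∞. -/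
open MeasureTheory
open scoped ENNReal NNReal

noncomputable section

/-- **Lemma 5.** If `w` is positive and increasing on `(0,1)`, `F, Φ` are locally `L²` on `ℝ`
and vanish on `(-∞,0)`, and `∫₀¹|F|²/w < ∞`, then `∫₀¹|F∗Φ|²/w < ∞`, where
`(F∗Φ)(t) = ∫₀ᵗ Φ(t-s)F(s) ds`. -/
theorem convolution_weighted_L2 (w : ℝ → ℝ)
    (hwpos : ∀ t ∈ Set.Ioo (0:ℝ) 1, 0 < w t)
    (hwmono : MonotoneOn w (Set.Ioo (0:ℝ) 1))
    (F Φ : ℝ → ℂ)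
    (hFloc : ∀ r : ℝ, 0 < r → MemLp F 2 (volume.restrict (Set.Ioo (-r) r)))
    (hΦloc : ∀ r : ℝ, 0 < r → MemLp Φ 2 (volume.restrict (Set.Ioo (-r) r)))
    (hF0 : ∀ t : ℝ, t < 0 → F t = 0) (hΦ0 : ∀ t : ℝ, t < 0 → Φ t = 0)
    (hF : (∫⁻ s in Set.Ioo (0:ℝ) 1, (‖F s‖₊ : ℝ≥0∞) ^ 2 / ENNReal.ofReal (w s)) ≠ ⊤) :
    (∫⁻ t in Set.Ioo (0:ℝ) 1,
      (‖∫ s in Set.Ioo (0:ℝ) t, Φ (t - s) * F s‖₊ : ℝ≥0∞) ^ 2 / ENNReal.ofReal (w t)) ≠ ⊤ := by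
  set A := ∫⁻ s in Set.Ioo (0:ℝ) 1, (‖F s‖₊ : ℝ≥0∞) ^ 2 / ENNReal.ofReal (w s) with hA
  set B := ∫⁻ u in Set.Ioo (0:ℝ) 1, (‖Φ u‖₊ : ℝ≥0∞) ^ (2:ℝ) with hBdef
  -- B is finite
  have hΦ1 : MemLp Φ 2 (volume.restrict (Set.Ioo (0:ℝ) 1)) := by
    refine (hΦloc 1 one_pos).mono_measure (Measure.restrict_mono ?_ le_rfl)
    intro x hx; exact ⟨by linarith [hx.1], hx.2⟩
  have hB : B ≠ ⊤ := by
    have := lintegral_rpow_enorm_lt_top_of_eLpNorm_lt_top (f := Φ)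
      (μ := volume.restrict (Set.Ioo (0:ℝ) 1)) two_ne_zero ENNReal.ofNat_ne_top hΦ1.2
    simpa [hBdef, ENNReal.toReal_ofNat, enorm_eq_nnnorm] using this.ne
  -- measurability
  have hΦm : AEMeasurable (fun u => (‖Φ u‖₊ : ℝ≥0∞)) (volume.restrict (Set.Ioo (0:ℝ) 1)) :=
    hΦ1.1.enorm
  have hFm : AEMeasurable (fun s => (‖F s‖₊ : ℝ≥0∞)) (volume.restrict (Set.Ioo (0:ℝ) 1)) := by
    have hF1 : MemLp F 2 (volume.restrict (Set.Ioo (0:ℝ) 1)) := by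
      refine (hFloc 1 one_pos).mono_measure (Measure.restrict_mono ?_ le_rfl)
      intro x hx; exact ⟨by linarith [hx.1], hx.2⟩
    exact hF1.1.enorm
  -- pointwise bound
  have key : ∀ t ∈ Set.Ioo (0:ℝ) 1,
      (‖∫ s in Set.Ioo (0:ℝ) t, Φ (t - s) * F s‖₊ : ℝ≥0∞) ^ 2 / ENNReal.ofReal (w t)
        ≤ B * A := by
    intro t ht
    have htsub : Set.Ioo (0:ℝ) t ⊆ Set.Ioo (0:ℝ) 1 := fun x hx => ⟨hx.1, hx.2.trans ht.2⟩
    have hrle : volume.restrict (Set.Ioo (0:ℝ) t) ≤ volume.restrict (Set.Ioo (0:ℝ) 1) :=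
      Measure.restrict_mono htsub le_rfl
    -- measure preserving reflection s ↦ t - s on (0,t)
    have hpre : (fun s : ℝ => t - s) ⁻¹' Set.Ioo (0:ℝ) t = Set.Ioo (0:ℝ) t := by
      ext x
      simp only [Set.mem_preimage, Set.mem_Ioo]
      constructor <;> rintro ⟨h1, h2⟩ <;> constructor <;> linarith
    have hmp : MeasurePreserving (fun s : ℝ => t - s)
        (volume.restrict (Set.Ioo (0:ℝ) t)) (volume.restrict (Set.Ioo (0:ℝ) t)) := by
      have := (Measure.measurePreserving_sub_left (volume : Measure ℝ) t).restrict_preimage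
        (s := Set.Ioo (0:ℝ) t) measurableSet_Ioo
      rwa [hpre] at this
    -- the two factors
    set X := ∫⁻ s in Set.Ioo (0:ℝ) t, (‖Φ (t - s)‖₊ : ℝ≥0∞) ^ (2:ℝ) with hXdef
    set Y := ∫⁻ s in Set.Ioo (0:ℝ) t, (‖F s‖₊ : ℝ≥0∞) ^ (2:ℝ) with hYdef
    have hΦmt : AEMeasurable (fun u => (‖Φ u‖₊ : ℝ≥0∞)) (volume.restrict (Set.Ioo (0:ℝ) t)) :=
      hΦm.mono_measure hrle
    have hΦcomp : AEMeasurable (fun s => (‖Φ (t - s)‖₊ : ℝ≥0∞))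
        (volume.restrict (Set.Ioo (0:ℝ) t)) :=
      hΦmt.comp_quasiMeasurePreserving hmp.quasiMeasurePreserving
    have hFmt : AEMeasurable (fun s => (‖F s‖₊ : ℝ≥0∞)) (volume.restrict (Set.Ioo (0:ℝ) t)) :=
      hFm.mono_measure hrle
    -- Cauchy–Schwarz
    have hnorm : (‖∫ s in Set.Ioo (0:ℝ) t, Φ (t - s) * F s‖₊ : ℝ≥0∞)
        ≤ ∫⁻ s in Set.Ioo (0:ℝ) t, (‖Φ (t - s)‖₊ : ℝ≥0∞) * (‖F s‖₊ : ℝ≥0∞) := by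
      refine (enorm_integral_le_lintegral_enorm _).trans_eq ?_
      refine lintegral_congr fun s => ?_
      rw [enorm_eq_nnnorm, nnnorm_mul]; push_cast; ring
    have hCS : (∫⁻ s in Set.Ioo (0:ℝ) t, (‖Φ (t - s)‖₊ : ℝ≥0∞) * (‖F s‖₊ : ℝ≥0∞))
        ≤ X ^ (1/2 : ℝ) * Y ^ (1/2 : ℝ) := by
      have := ENNReal.lintegral_mul_le_Lp_mul_Lq (volume.restrict (Set.Ioo (0:ℝ) t))
        (Real.HolderConjugate.two_two)
        hΦcomp hFmt
      simpa [hXdef, hYdef] using this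
    have hsq : (‖∫ s in Set.Ioo (0:ℝ) t, Φ (t - s) * F s‖₊ : ℝ≥0∞) ^ 2 ≤ X * Y := by
      calc (‖∫ s in Set.Ioo (0:ℝ) t, Φ (t - s) * F s‖₊ : ℝ≥0∞) ^ 2
          ≤ (X ^ (1/2 : ℝ) * Y ^ (1/2 : ℝ)) ^ 2 :=
            pow_le_pow_left' (hnorm.trans hCS) 2
        _ = X * Y := by
            rw [mul_pow, ← ENNReal.rpow_natCast (X ^ (1/2 : ℝ)) 2,
              ← ENNReal.rpow_natCast (Y ^ (1/2 : ℝ)) 2, ← ENNReal.rpow_mul,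
              ← ENNReal.rpow_mul]
            norm_num
    -- bound X by B
    have hX : X ≤ B := by
      have hmap : ∫⁻ s in Set.Ioo (0:ℝ) t, (‖Φ (t - s)‖₊ : ℝ≥0∞) ^ (2:ℝ)
          = ∫⁻ u in Set.Ioo (0:ℝ) t, (‖Φ u‖₊ : ℝ≥0∞) ^ (2:ℝ) := by
        have hfm : AEMeasurable (fun u => (‖Φ u‖₊ : ℝ≥0∞) ^ (2:ℝ))
            (Measure.map (fun s : ℝ => t - s) (volume.restrict (Set.Ioo (0:ℝ) t))) := by
          rw [hmp.map_eq]
          exact hΦmt.pow_const _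
        rw [← lintegral_map' hfm (aemeasurable_const.sub aemeasurable_id), hmp.map_eq]
      rw [hXdef, hmap]
      exact lintegral_mono' hrle le_rfl
    -- bound Y by w t * A
    have hwt : (0:ℝ) < w t := hwpos t ht
    have hY : Y ≤ ENNReal.ofReal (w t) * A := by
      have hpt : ∀ s ∈ Set.Ioo (0:ℝ) t, (‖F s‖₊ : ℝ≥0∞) ^ (2:ℝ)
          ≤ ENNReal.ofReal (w t) * ((‖F s‖₊ : ℝ≥0∞) ^ 2 / ENNReal.ofReal (w s)) := by
        intro s hs
        have hs1 : s ∈ Set.Ioo (0:ℝ) 1 := htsub hs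
        have hws : (0:ℝ) < w s := hwpos s hs1
        have hle : w s ≤ w t := hwmono hs1 ht hs.2.le
        have hb0 : ENNReal.ofReal (w s) ≠ 0 := by
          simpa [ENNReal.ofReal_eq_zero, not_le] using hws
        have hcancel : (‖F s‖₊ : ℝ≥0∞) ^ 2
            = (‖F s‖₊ : ℝ≥0∞) ^ 2 / ENNReal.ofReal (w s) * ENNReal.ofReal (w s) :=
          (ENNReal.div_mul_cancel hb0 ENNReal.ofReal_ne_top).symm
        calc (‖F s‖₊ : ℝ≥0∞) ^ (2:ℝ) = (‖F s‖₊ : ℝ≥0∞) ^ 2 := by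
              rw [← ENNReal.rpow_natCast _ 2]; norm_num
          _ = (‖F s‖₊ : ℝ≥0∞) ^ 2 / ENNReal.ofReal (w s) * ENNReal.ofReal (w s) := hcancel
          _ ≤ (‖F s‖₊ : ℝ≥0∞) ^ 2 / ENNReal.ofReal (w s) * ENNReal.ofReal (w t) :=
              mul_le_mul_right (ENNReal.ofReal_le_ofReal hle) _
          _ = ENNReal.ofReal (w t) * ((‖F s‖₊ : ℝ≥0∞) ^ 2 / ENNReal.ofReal (w s)) :=
              mul_comm _ _
      calc Y ≤ ∫⁻ s in Set.Ioo (0:ℝ) t,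
            ENNReal.ofReal (w t) * ((‖F s‖₊ : ℝ≥0∞) ^ 2 / ENNReal.ofReal (w s)) :=
            setLIntegral_mono' measurableSet_Ioo hpt
        _ = ENNReal.ofReal (w t) * ∫⁻ s in Set.Ioo (0:ℝ) t,
            (‖F s‖₊ : ℝ≥0∞) ^ 2 / ENNReal.ofReal (w s) :=
            lintegral_const_mul' _ _ ENNReal.ofReal_ne_top
        _ ≤ ENNReal.ofReal (w t) * A :=
            mul_le_mul_right (lintegral_mono' hrle le_rfl) _
    -- combine
    have hc0 : ENNReal.ofReal (w t) ≠ 0 := by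
      simpa [ENNReal.ofReal_eq_zero, not_le] using hwt
    calc (‖∫ s in Set.Ioo (0:ℝ) t, Φ (t - s) * F s‖₊ : ℝ≥0∞) ^ 2 / ENNReal.ofReal (w t)
        ≤ B * (ENNReal.ofReal (w t) * A) / ENNReal.ofReal (w t) :=
          ENNReal.div_le_div_right (hsq.trans (mul_le_mul' hX hY)) _
      _ = B * A * (ENNReal.ofReal (w t) / ENNReal.ofReal (w t)) := by
          rw [show B * (ENNReal.ofReal (w t) * A) = B * A * ENNReal.ofReal (w t) by ring,
            mul_div_assoc]
      _ = B * A := by rw [ENNReal.div_self hc0 ENNReal.ofReal_ne_top, mul_one]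
  -- integrate the constant bound
  have hfin : (∫⁻ t in Set.Ioo (0:ℝ) 1,
      (‖∫ s in Set.Ioo (0:ℝ) t, Φ (t - s) * F s‖₊ : ℝ≥0∞) ^ 2 / ENNReal.ofReal (w t))
      ≤ B * A * volume (Set.Ioo (0:ℝ) 1) := by
    calc _ ≤ ∫⁻ _ in Set.Ioo (0:ℝ) 1, B * A := setLIntegral_mono' measurableSet_Ioo key
      _ = B * A * volume (Set.Ioo (0:ℝ) 1) := setLIntegral_const _ _
  refine ne_top_of_le_ne_top ?_ hfin
  refine ENNReal.mul_ne_top (ENNReal.mul_ne_top hB hF) ?_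
  simp [Real.volume_Ioo]
end
end
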